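/- (Moore's diagonalization, special case used in the paper) Let γ : Γ × Γ → W₀ be a symmetric flat bilinear form on a finite-dimensional real vector space Γ with values in an inner product space W₀, with trivial nullity and with S(γ) = W₀ and dim Γ − dim(nullity γ) = dim W₀ =: m. Then there exist vectors Z₁, …, Z_m ∈ Γ such that γ(Z_i, Z_j) = 0 for i ≠ j and {γ(Z_i, Z_i)} is an orthonormal basis of W₀. -/

import Mathlib

open Module LinearMap RealInnerProductSpace


section Helpers

variable {ι W : Type*} [Fintype ι] [DecidableEq ι] [NormedAddCommGroup W] [InnerProductSpace ℝ W]

lemma gram_det_ne_zero_iff (v : ι → W) :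
    LinearIndependent ℝ v ↔ (Matrix.of fun i j => (⟪v i, v j⟫ : ℝ)).det ≠ 0 := by
  classical
  constructor
  · intro hv hdet
    obtain ⟨g, hg, hg0⟩ := Matrix.exists_mulVec_eq_zero_iff.mpr hdet
    have hsum : ∀ i, ∑ j, (⟪v i, v j⟫ : ℝ) * g j = 0 := by
      intro i
      have := congrFun hg0 i
      simpa [Matrix.mulVec, dotProduct] using this
    have hz : (∑ j, g j • v j) = 0 := by
      have h1 : (⟪∑ i, g i • v i, ∑ j, g j • v j⟫ : ℝ) = 0 := by
        rw [sum_inner]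
        refine Finset.sum_eq_zero fun i _ => ?_
        rw [real_inner_smul_left, inner_sum]
        have : ∀ j, (⟪v i, g j • v j⟫ : ℝ) = ⟪v i, v j⟫ * g j := by
          intro j; rw [real_inner_smul_right]; ring
        rw [Finset.sum_congr rfl fun j _ => this j, hsum i, mul_zero]
      exact inner_self_eq_zero.mp h1
    have := Fintype.linearIndependent_iff.mp hv g hz
    exact hg (funext this)
  · intro hdet
    by_contra hnv
    obtain ⟨g, hsum, i, hgi⟩ := Fintype.not_linearIndependent_iff.mp hnv
    apply hdet
    rw [← Matrix.exists_mulVec_eq_zero_iff]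
    refine ⟨g, fun h => hgi (congrFun h i), ?_⟩
    funext k
    simp only [Matrix.mulVec, dotProduct, Matrix.of_apply, Pi.zero_apply]
    have : ∀ j, (⟪v k, v j⟫ : ℝ) * g j = ⟪v k, g j • v j⟫ := by
      intro j; rw [real_inner_smul_right]; ring
    rw [Finset.sum_congr rfl fun j _ => this j, ← inner_sum, hsum, inner_zero_right]

open Polynomial in
lemma not_linearIndependent_limit (a b : ι → W)
    (h : ∀ t : ℝ, t ≠ 0 → ¬ LinearIndependent ℝ fun i => a i + t • b i) :
    ¬ LinearIndependent ℝ a := by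
  classical
  set M : Matrix ι ι ℝ[X] := Matrix.of fun i j =>
    C (⟪a i, a j⟫ : ℝ) + C ((⟪a i, b j⟫ : ℝ) + (⟪b i, a j⟫ : ℝ)) * X
      + C (⟪b i, b j⟫ : ℝ) * X ^ 2 with hM
  have hev : ∀ t : ℝ, (M.det).eval t =
      (Matrix.of fun i j => (⟪a i + t • b i, a j + t • b j⟫ : ℝ)).det := by
    intro t
    have h1 := RingHom.map_det (evalRingHom t) M
    simp only [coe_evalRingHom] at h1
    rw [h1]
    congr 1
    ext i j
    simp only [RingHom.mapMatrix_apply, Matrix.map_apply, Matrix.of_apply, hM, coe_evalRingHom,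
      eval_add, eval_mul, eval_C, eval_X, eval_pow,
      inner_add_left, inner_add_right, real_inner_smul_left, real_inner_smul_right]
    ring
  have hzero : M.det = 0 := by
    apply Polynomial.eq_zero_of_infinite_isRoot
    apply Set.Infinite.mono (s := ({(0:ℝ)}ᶜ : Set ℝ))
    · intro t ht
      have ht' : t ≠ 0 := Set.mem_compl_singleton_iff.mp ht
      have : ¬ LinearIndependent ℝ fun i => a i + t • b i := h t ht'
      rw [gram_det_ne_zero_iff, not_not] at this
      simp only [Set.mem_setOf_eq, IsRoot.def]
      rw [hev t, this]
    · exact Set.Finite.infinite_compl (Set.finite_singleton 0)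
  intro hind
  have h0 := hev 0
  rw [hzero] at h0
  simp only [eval_zero, zero_smul, add_zero] at h0
  exact (gram_det_ne_zero_iff a).mp hind h0.symm

end Helpers

section Regular

variable {Γ W₀ : Type*} [AddCommGroup Γ] [Module ℝ Γ] [FiniteDimensional ℝ Γ]
    [NormedAddCommGroup W₀] [InnerProductSpace ℝ W₀] [FiniteDimensional ℝ W₀]

lemma exists_bijective_slice (γ : Γ →ₗ[ℝ] Γ →ₗ[ℝ] W₀)
    (hsymm : ∀ X Y : Γ, γ X Y = γ Y X)
    (hflat : ∀ X Y Z T : Γ, ⟪γ X Y, γ Z T⟫ = ⟪γ X T, γ Z Y⟫)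
    (hnull : ker γ = ⊥)
    (hdim : finrank ℝ Γ = finrank ℝ W₀) :
    ∃ X : Γ, Function.Bijective (γ X) := by
  classical
  -- pick X of maximal rank
  obtain ⟨X, hX⟩ : ∃ X : Γ, ∀ Y : Γ,
      finrank ℝ (range (γ Y)) ≤ finrank ℝ (range (γ X)) := by
    have hne : (Set.range fun Y : Γ => finrank ℝ (range (γ Y))).Nonempty := ⟨_, ⟨0, rfl⟩⟩
    have hbdd : BddAbove (Set.range fun Y : Γ => finrank ℝ (range (γ Y))) := by
      refine ⟨finrank ℝ W₀, ?_⟩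
      rintro n ⟨Y, rfl⟩
      exact (range (γ Y)).finrank_le
    obtain ⟨X, hX⟩ := Nat.sSup_mem hne hbdd
    exact ⟨X, fun Y => (le_csSup hbdd ⟨Y, rfl⟩).trans_eq hX.symm⟩
  set K := range (γ X) with hK
  set r := finrank ℝ K with hr
  have hker : ∀ z, γ X z = 0 → z = 0 := by
    intro z hz
    have hYz : ∀ Y, γ Y z = 0 := by
      intro Y
      -- a basis of K with preimages
      let w : Basis (Fin r) ℝ K := finBasis ℝ K
      have hmem : ∀ i : Fin r, ∃ y : Γ, γ X y = (w i : W₀) := fun i =>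
        LinearMap.mem_range.mp (w i).2
      choose v hv using hmem
      set a0 : Fin r → W₀ := fun i => γ X (v i) with ha0
      -- the snoc family is dependent for every t ≠ 0
      have hdep : ∀ t : ℝ, t ≠ 0 → ¬ LinearIndependent ℝ
          fun i => (Fin.snoc a0 (γ Y z) : Fin (r+1) → W₀) i
            + t • (Fin.snoc (fun i => γ Y (v i)) (0:W₀) : Fin (r+1) → W₀) i := by
        intro t ht hli
        have hmem' : ∀ i : Fin (r+1),
            ((Fin.snoc a0 (γ Y z) : Fin (r+1) → W₀) i
              + t • (Fin.snoc (fun i => γ Y (v i)) (0:W₀) : Fin (r+1) → W₀) i)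
              ∈ range (γ (X + t • Y)) := by
          intro i
          refine Fin.lastCases ?_ ?_ i
          · simp only [Fin.snoc_last, smul_zero, add_zero]
            refine ⟨t⁻¹ • z, ?_⟩
            simp only [map_add, map_smul, LinearMap.add_apply, LinearMap.smul_apply, hz,
              smul_zero, zero_add]
            rw [smul_comm, ← smul_assoc]
            simp [mul_inv_cancel₀ ht]
          · intro i
            simp only [Fin.snoc_castSucc, ha0]
            exact ⟨v i, by simp [map_add]⟩
        have h1 : finrank ℝ (Submodule.span ℝ (Set.range fun i =>
            (Fin.snoc a0 (γ Y z) : Fin (r+1) → W₀) i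
              + t • (Fin.snoc (fun i => γ Y (v i)) (0:W₀) : Fin (r+1) → W₀) i)) = r + 1 := by
          rw [finrank_span_eq_card hli, Fintype.card_fin]
        have h2 : finrank ℝ (Submodule.span ℝ (Set.range fun i =>
            (Fin.snoc a0 (γ Y z) : Fin (r+1) → W₀) i
              + t • (Fin.snoc (fun i => γ Y (v i)) (0:W₀) : Fin (r+1) → W₀) i)) ≤ r := by
          refine le_trans (Submodule.finrank_mono ?_) (hX (X + t • Y))
          rw [Submodule.span_le]
          rintro u ⟨i, rfl⟩
          exact hmem' i
        rw [h1] at h2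
        omega
      have hnotli := not_linearIndependent_limit _ _ hdep
      rw [linearIndependent_fin_snoc] at hnotli
      -- the base family is independent
      have hbase : LinearIndependent ℝ a0 := by
        have heq : a0 = fun i => K.subtype (w i) := by funext i; rw [ha0]; exact hv i
        rw [heq]
        exact w.linearIndependent.map' K.subtype K.ker_subtype
      have hspanw : Submodule.span ℝ (Set.range a0) = K := by
        have heq : Set.range a0 = K.subtype '' Set.range w := by
          ext u
          constructor
          · rintro ⟨i, rfl⟩; exact ⟨w i, ⟨i, rfl⟩, (hv i).symm⟩
          · rintro ⟨x, ⟨i, rfl⟩, rfl⟩; exact ⟨i, hv i⟩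
        rw [heq, ← Submodule.map_span, w.span_eq, Submodule.map_top, Submodule.range_subtype]
      have hKmem : γ Y z ∈ K := by
        rw [← hspanw]
        by_contra hc
        exact hnotli ⟨hbase, hc⟩
      have horth : γ Y z ∈ Kᗮ := by
        rw [Submodule.mem_orthogonal]
        rintro u ⟨T, rfl⟩
        rw [real_inner_comm]
        rw [hflat Y z X T, hz, inner_zero_right]
      have := (Submodule.orthogonal_disjoint K).le_bot ⟨hKmem, horth⟩
      simpa using this
    have hmemker : z ∈ ker γ := by
      rw [LinearMap.mem_ker]
      ext Y
      rw [LinearMap.zero_apply, hsymm z Y]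
      exact hYz Y
    rwa [hnull, Submodule.mem_bot] at hmemker
  have hinj : Function.Injective (γ X) :=
    LinearMap.ker_eq_bot.mp (LinearMap.ker_eq_bot'.mpr hker)
  exact ⟨X, hinj, (LinearMap.injective_iff_surjective_of_finrank_eq_finrank hdim).mp hinj⟩

end Regular
/-- Moore's diagonalization: a symmetric flat bilinear form with trivial nullity,
full span, and `dim Γ = dim W₀ = m` can be diagonalized by vectors `Z₁, …, Z_m` with
`γ(Z_i, Z_j) = 0` for `i ≠ j` and `{γ(Z_i, Z_i)}` an orthonormal basis of `W₀`. -/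
theorem moore_diagonalization
    {Γ W₀ : Type*} [AddCommGroup Γ] [Module ℝ Γ] [FiniteDimensional ℝ Γ]
    [NormedAddCommGroup W₀] [InnerProductSpace ℝ W₀] [FiniteDimensional ℝ W₀]
    (γ : Γ →ₗ[ℝ] Γ →ₗ[ℝ] W₀)
    (hsymm : ∀ X Y : Γ, γ X Y = γ Y X)
    (hflat : ∀ X Y Z T : Γ, ⟪γ X Y, γ Z T⟫ = ⟪γ X T, γ Z Y⟫)
    (hnull : ker γ = ⊥)
    (hspan : Submodule.span ℝ {w : W₀ | ∃ X Y : Γ, w = γ X Y} = ⊤)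
    (hdim : finrank ℝ Γ = finrank ℝ W₀) :
    ∃ Z : Fin (finrank ℝ W₀) → Γ,
      (∀ i j, i ≠ j → γ (Z i) (Z j) = 0) ∧
      ∃ b : OrthonormalBasis (Fin (finrank ℝ W₀)) ℝ W₀,
        ∀ i, b i = γ (Z i) (Z i) := by
  classical
  obtain ⟨X, hbij⟩ := exists_bijective_slice γ hsymm hflat hnull hdim
  set e : Γ ≃ₗ[ℝ] W₀ := LinearEquiv.ofBijective (γ X) hbij with he
  have heq : ∀ u : W₀, γ X (e.symm u) = u := fun u => e.apply_symm_apply u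
  set T : Γ → W₀ →ₗ[ℝ] W₀ := fun Y => (γ Y).comp e.symm.toLinearMap with hT
  have hTapp : ∀ Y u, T Y u = γ Y (e.symm u) := fun Y u => rfl
  have hTflat : ∀ Y Y' (u v : W₀), ⟪T Y u, T Y' v⟫ = ⟪T Y v, T Y' u⟫ := fun Y Y' u v =>
    hflat Y (e.symm u) Y' (e.symm v)
  have hTsymm : ∀ Y, (T Y).IsSymmetric := by
    intro Y u v
    calc ⟪T Y u, v⟫ = ⟪T Y u, T X v⟫ := by rw [hTapp X v, heq]
    _ = ⟪T Y v, T X u⟫ := hTflat Y X u v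
    _ = ⟪u, T Y v⟫ := by rw [hTapp X u, heq, real_inner_comm]
  have hcomm : Pairwise (Function.onFun Commute T) := by
    intro Y Y' _
    have key : ∀ u v : W₀, ⟪(T Y' * T Y) u, v⟫ = ⟪(T Y * T Y') u, v⟫ := by
      intro u v
      calc ⟪(T Y' * T Y) u, v⟫ = ⟪T Y u, T Y' v⟫ := hTsymm Y' (T Y u) v
      _ = ⟪T Y v, T Y' u⟫ := hTflat Y Y' u v
      _ = ⟪T Y' u, T Y v⟫ := real_inner_comm _ _
      _ = ⟪(T Y * T Y') u, v⟫ := (hTsymm Y (T Y' u) v).symm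
    have : T Y' * T Y = T Y * T Y' := by
      ext u
      exact ext_inner_right ℝ fun v => key u v
    exact this.symm
  have htop := LinearMap.IsSymmetric.iSup_iInf_eq_top_of_commute hTsymm hcomm
  -- a spanning set of joint eigenvectors
  set S : Set W₀ :=
    ⋃ χ : Γ → ℝ, ((⨅ Y, Module.End.eigenspace (T Y) (χ Y) : Submodule ℝ W₀) : Set W₀) with hS
  have hspanS : Submodule.span ℝ S = ⊤ := by
    rw [hS, Submodule.span_iUnion]
    simpa only [Submodule.span_eq] using htop
  obtain ⟨s, hsS, hspans, hli⟩ := exists_linearIndependent ℝ S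
  rw [hspanS] at hspans
  have hsfin : s.Finite := hli.setFinite
  haveI := hsfin.fintype
  let bs : Basis s ℝ W₀ := Basis.mk hli (by rw [Subtype.range_coe, hspans])
  have hcard : Fintype.card s = finrank ℝ W₀ := (finrank_eq_card_basis bs).symm
  let σ : Fin (finrank ℝ W₀) ≃ s := (Fintype.equivFinOfCardEq hcard).symm
  set f : Fin (finrank ℝ W₀) → W₀ := fun i => ((σ i : s) : W₀) with hf
  have hfli : LinearIndependent ℝ f := hli.comp σ σ.injective
  have hfS : ∀ i, ∃ χ : Γ → ℝ, ∀ Y, T Y (f i) = χ Y • f i := by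
    intro i
    obtain ⟨χi, hχi⟩ := Set.mem_iUnion.mp (hsS (σ i).2)
    exact ⟨χi, fun Y => Module.End.mem_eigenspace_iff.mp ((Submodule.mem_iInf _).mp hχi Y)⟩
  choose χ hχ using hfS
  set Z' : Fin (finrank ℝ W₀) → Γ := fun i => e.symm (f i) with hZ'
  have hγZ' : ∀ i j, γ (Z' i) (Z' j) = χ j (Z' i) • f j := fun i j => hχ j (Z' i)
  -- pairwise independence gives vanishing off-diagonal
  have hpair : ∀ i j, i ≠ j → ∀ p q : ℝ, p • f i = q • f j → p = 0 := by
    intro i j hij p q hpq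
    set g : Fin (finrank ℝ W₀) → ℝ := fun k => if k = i then p else if k = j then -q else 0 with hg
    have hsum : ∑ k, g k • f k = 0 := by
      rw [← Finset.sum_subset (Finset.subset_univ ({i, j} : Finset _))
        (fun k _ hk => by
          simp only [Finset.mem_insert, Finset.mem_singleton, not_or] at hk
          simp [hg, hk.1, hk.2]),
        Finset.sum_pair hij]
      have hgi : g i = p := by simp [hg]
      have hgj : g j = -q := by simp [hg, Ne.symm hij]
      rw [hgi, hgj, hpq, neg_smul, add_neg_cancel]
    have := Fintype.linearIndependent_iff.mp hfli g hsum i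
    simpa [hg] using this
  have hoffZ' : ∀ i j, i ≠ j → γ (Z' i) (Z' j) = 0 := by
    intro i j hij
    have h1 : χ j (Z' i) • f j = χ i (Z' j) • f i := by
      rw [← hγZ' i j, hsymm (Z' i) (Z' j), hγZ' j i]
    have h2 : χ j (Z' i) = 0 := hpair j i (Ne.symm hij) _ _ h1
    rw [hγZ' i j, h2, zero_smul]
  -- diagonal entries are nonzero
  have hfne : ∀ i, f i ≠ 0 := fun i => hfli.ne_zero i
  have hcne : ∀ i, χ i (Z' i) ≠ 0 := by
    intro i hc0
    have h0 : γ (Z' i) (Z' i) = 0 := by rw [hγZ' i i, hc0, zero_smul]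
    have hall : ∀ A, γ (Z' i) A = 0 := by
      intro A
      have h1 : ⟪γ (Z' i) A, γ (Z' i) A⟫ = (0:ℝ) := by
        calc ⟪γ (Z' i) A, γ (Z' i) A⟫ = ⟪γ (Z' i) A, γ A (Z' i)⟫ := by rw [hsymm A (Z' i)]
        _ = ⟪γ (Z' i) (Z' i), γ A A⟫ := hflat (Z' i) A A (Z' i)
        _ = 0 := by rw [h0, inner_zero_left]
      exact inner_self_eq_zero.mp h1
    have hz0 : Z' i = 0 := by
      have hmk : Z' i ∈ ker γ := LinearMap.mem_ker.mpr (LinearMap.ext hall)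
      rwa [hnull, Submodule.mem_bot] at hmk
    exact hfne i (by rw [← e.apply_symm_apply (f i)]; show e (Z' i) = 0; rw [hz0, map_zero])
  -- normalize
  set c : Fin (finrank ℝ W₀) → ℝ := fun i => χ i (Z' i) with hc
  set d : Fin (finrank ℝ W₀) → ℝ := fun i => Real.sqrt (|c i| * ‖f i‖) with hd
  have hdpos : ∀ i, 0 < d i := by
    intro i
    apply Real.sqrt_pos.mpr
    exact mul_pos (abs_pos.mpr (hcne i)) (norm_pos_iff.mpr (hfne i))
  set Z : Fin (finrank ℝ W₀) → Γ := fun i => (d i)⁻¹ • Z' i with hZdef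
  have hγZdiag : ∀ i, γ (Z i) (Z i) = ((|c i| * ‖f i‖)⁻¹ * c i) • f i := by
    intro i
    rw [hZdef]
    simp only [map_smul, LinearMap.smul_apply]
    rw [hγZ' i i, smul_smul, smul_smul]
    congr 1
    show (d i)⁻¹ * (d i)⁻¹ * c i = (|c i| * ‖f i‖)⁻¹ * c i
    have h1 : d i * d i = |c i| * ‖f i‖ := Real.mul_self_sqrt (by positivity)
    rw [← h1, mul_inv]
  have hoff : ∀ i j, i ≠ j → γ (Z i) (Z j) = 0 := by
    intro i j hij
    rw [hZdef]
    simp only [map_smul, LinearMap.smul_apply]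
    rw [hoffZ' i j hij, smul_zero, smul_zero]
  set w : Fin (finrank ℝ W₀) → W₀ := fun i => γ (Z i) (Z i) with hw
  have hnorm : ∀ i, ‖w i‖ = 1 := by
    intro i
    have hne : |c i| * ‖f i‖ ≠ 0 :=
      mul_ne_zero (abs_ne_zero.mpr (hcne i)) (norm_ne_zero_iff.mpr (hfne i))
    show ‖γ (Z i) (Z i)‖ = 1
    rw [hγZdiag i, norm_smul, Real.norm_eq_abs, abs_mul, abs_inv, abs_mul, abs_abs, abs_norm,
      mul_assoc, inv_mul_cancel₀ hne]
  have hworth : ∀ i j, i ≠ j → ⟪w i, w j⟫ = (0:ℝ) := by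
    intro i j hij
    calc ⟪γ (Z i) (Z i), γ (Z j) (Z j)⟫ = ⟪γ (Z i) (Z j), γ (Z j) (Z i)⟫ :=
      hflat (Z i) (Z i) (Z j) (Z j)
    _ = 0 := by rw [hoff i j hij, inner_zero_left]
  have hworth' : Orthonormal ℝ w := ⟨hnorm, fun i j hij => hworth i j hij⟩
  have hwcard : finrank ℝ W₀ = Fintype.card (Fin (finrank ℝ W₀)) := (Fintype.card_fin _).symm
  have hrestrict : Orthonormal ℝ ((Set.univ : Set (Fin (finrank ℝ W₀))).restrict w) :=
    hworth'.comp Subtype.val Subtype.val_injective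
  obtain ⟨b, hb⟩ := hrestrict.exists_orthonormalBasis_extension_of_card_eq hwcard
  exact ⟨Z, hoff, b, fun i => hb i (Set.mem_univ i)⟩
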